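/- Let f : ℝ → ℝ → ℝ satisfy |f(t,u₁) − f(t,u₂)| ≤ L|u₁ − u₂| for all t, u₁, u₂, with L ≥ 0. Fix reals b₁, b₂, c₂ with c₂ ≥ 0, a step size h ≥ 0, a time t, a shape parameter e ∈ ℝ, and set E = exp(−e c₂² h²). For w ∈ ℝ define k₁(w) = f(t, w) and k₂(w) = f(t + c₂h, wE + h c₂ k₁(w)), and define Φ(w) = w + h(b₁k₁(w) + b₂k₂(w)). Then for all w₁, w₂ ∈ ℝ, |Φ(w₁) − Φ(w₂)| ≤ (1 + |b₁|hL + |b₂|hL(E + c₂hL)) |w₁ − w₂|. In particular, if u is any function with value u(t) at time t and τ = (u(t+h) − u(t))/h − (b₁k₁(u(t)) + b₂k₂(u(t))), then |u(t+h) − Φ(w)| ≤ (1 + |b₁|hL + |b₂|hL(E + c₂hL)) |u(t) − w| + h|τ| for every w ∈ ℝ. -/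
import Mathlib


/-- Lipschitz bound for the one-step map of the two-stage RBF Runge–Kutta method,
and the resulting one-step error estimate in terms of the local truncation error. -/
theorem stmt_2 (f : ℝ → ℝ → ℝ) (L : ℝ) (hL : 0 ≤ L)
    (hf : ∀ t u₁ u₂ : ℝ, |f t u₁ - f t u₂| ≤ L * |u₁ - u₂|)
    (b₁ b₂ c₂ h t e E : ℝ) (hc₂ : 0 ≤ c₂) (hh : 0 ≤ h)
    (hE : E = Real.exp (-e * c₂ ^ 2 * h ^ 2))
    (k₁ k₂ Φ : ℝ → ℝ)
    (hk₁ : ∀ w, k₁ w = f t w)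
    (hk₂ : ∀ w, k₂ w = f (t + c₂ * h) (w * E + h * c₂ * k₁ w))
    (hΦ : ∀ w, Φ w = w + h * (b₁ * k₁ w + b₂ * k₂ w)) :
    (∀ w₁ w₂ : ℝ,
        |Φ w₁ - Φ w₂| ≤ (1 + |b₁| * h * L + |b₂| * h * L * (E + c₂ * h * L)) * |w₁ - w₂|)
    ∧ ∀ (u : ℝ → ℝ) (w : ℝ),
        |u (t + h) - Φ w|
          ≤ (1 + |b₁| * h * L + |b₂| * h * L * (E + c₂ * h * L)) * |u t - w|
            + h * |(u (t + h) - u t) / h - (b₁ * k₁ (u t) + b₂ * k₂ (u t))| := by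
  have hEpos : (0:ℝ) < E := hE ▸ Real.exp_pos _
  have hk1d : ∀ w₁ w₂ : ℝ, |k₁ w₁ - k₁ w₂| ≤ L * |w₁ - w₂| := by
    intro w₁ w₂; rw [hk₁, hk₁]; exact hf t w₁ w₂
  have hk2d : ∀ w₁ w₂ : ℝ, |k₂ w₁ - k₂ w₂| ≤ L * (E + c₂ * h * L) * |w₁ - w₂| := by
    intro w₁ w₂
    rw [hk₂, hk₂]
    refine le_trans (hf _ _ _) ?_
    have h1 : (w₁ * E + h * c₂ * k₁ w₁) - (w₂ * E + h * c₂ * k₁ w₂)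
        = (w₁ - w₂) * E + h * c₂ * (k₁ w₁ - k₁ w₂) := by ring
    rw [h1]
    have h2 : |(w₁ - w₂) * E + h * c₂ * (k₁ w₁ - k₁ w₂)|
        ≤ |w₁ - w₂| * E + h * c₂ * (L * |w₁ - w₂|) := by
      refine le_trans (abs_add_le _ _) ?_
      gcongr
      · rw [abs_mul, abs_of_pos hEpos]
      · rw [abs_mul, abs_mul, abs_of_nonneg hh, abs_of_nonneg hc₂]
        gcongr
        exact hk1d w₁ w₂
    nlinarith [abs_nonneg (w₁ - w₂), mul_le_mul_of_nonneg_left h2 hL]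
  have main : ∀ w₁ w₂ : ℝ,
      |Φ w₁ - Φ w₂| ≤ (1 + |b₁| * h * L + |b₂| * h * L * (E + c₂ * h * L)) * |w₁ - w₂| := by
    intro w₁ w₂
    rw [hΦ, hΦ]
    have h1 : (w₁ + h * (b₁ * k₁ w₁ + b₂ * k₂ w₁)) - (w₂ + h * (b₁ * k₁ w₂ + b₂ * k₂ w₂))
        = (w₁ - w₂) + (h * b₁) * (k₁ w₁ - k₁ w₂) + (h * b₂) * (k₂ w₁ - k₂ w₂) := by ring
    rw [h1]
    calc |(w₁ - w₂) + (h * b₁) * (k₁ w₁ - k₁ w₂) + (h * b₂) * (k₂ w₁ - k₂ w₂)|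
        ≤ |w₁ - w₂| + |h * b₁| * |k₁ w₁ - k₁ w₂| + |h * b₂| * |k₂ w₁ - k₂ w₂| := by
          refine le_trans (abs_add_le _ _) ?_
          gcongr
          · exact le_trans (abs_add_le _ _) (by rw [abs_mul])
          · rw [abs_mul]
      _ ≤ |w₁ - w₂| + |h * b₁| * (L * |w₁ - w₂|)
            + |h * b₂| * (L * (E + c₂ * h * L) * |w₁ - w₂|) := by
          gcongr
          · exact hk1d w₁ w₂
          · exact hk2d w₁ w₂
      _ = (1 + |b₁| * h * L + |b₂| * h * L * (E + c₂ * h * L)) * |w₁ - w₂| := by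
          rw [abs_mul, abs_mul, abs_of_nonneg hh]; ring
  refine ⟨main, ?_⟩
  intro u w
  have step : |u (t + h) - Φ (u t)|
      ≤ h * |(u (t + h) - u t) / h - (b₁ * k₁ (u t) + b₂ * k₂ (u t))| := by
    rcases eq_or_lt_of_le hh with hh0 | hh0
    · rw [hΦ]
      simp [← hh0]
    · have : u (t + h) - Φ (u t)
          = h * ((u (t + h) - u t) / h - (b₁ * k₁ (u t) + b₂ * k₂ (u t))) := by
        rw [hΦ]; field_simp; ring
      rw [this, abs_mul, abs_of_pos hh0]
  calc |u (t + h) - Φ w| ≤ |u (t + h) - Φ (u t)| + |Φ (u t) - Φ w| := by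
        have := abs_sub_le (u (t + h)) (Φ (u t)) (Φ w); linarith
    _ ≤ h * |(u (t + h) - u t) / h - (b₁ * k₁ (u t) + b₂ * k₂ (u t))|
          + (1 + |b₁| * h * L + |b₂| * h * L * (E + c₂ * h * L)) * |u t - w| := by
        exact add_le_add step (main _ _)
    _ = _ := by ring
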